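/- Completeness of the vertex elimination s-t-reachability encoding: if φ is satisfied by a model M such that t is reachable from s in G_M, and the elimination ordering O places s and t after all other vertices, then φ conjoined with the s-t-reachability encoding (clauses e'_{i,j} → e_{i,j} ∨ ⋁ t_{i,k,j}, t_{i,k,j} → e'_{i,k}∧e'_{k,j}, and unit clause e'_{s,t}) is satisfiable. -/

import Mathlib

/-- The vertex elimination sequence: `elimSeq E i` is the edge relation of the
graph `G_i` obtained from `G = G_0` by successively eliminating the vertices
`0, 1, ..., i-1` (the elimination ordering is the index order on `Fin n`).
Eliminating a vertex removes it and connects each of its in-neighbors to each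
of its out-neighbors (no self-loops). -/
def elimSeq {n : ℕ} (E : Fin n → Fin n → Prop) : ℕ → Fin n → Fin n → Prop
  | 0 => E
  | (i+1) => fun j k =>
      j.val ≠ i ∧ k.val ≠ i ∧
      (elimSeq E i j k ∨
        (j ≠ k ∧ ∃ m : Fin n, m.val = i ∧ elimSeq E i j m ∧ elimSeq E i m k))

/-- The vertex elimination graph `G*`: the union of all the `G_i`. -/
def estar {n : ℕ} (E : Fin n → Fin n → Prop) (j k : Fin n) : Prop :=
  ∃ i, elimSeq E i j k

/-- `tri E a b c` : the triangle recording that the edge `(a, c)` is created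
while eliminating the (middle) vertex `b`. -/
def tri {n : ℕ} (E : Fin n → Fin n → Prop) (a b c : Fin n) : Prop :=
  a ≠ c ∧ elimSeq E b.val a b ∧ elimSeq E b.val b c

/-- A directed graph is acyclic iff no vertex lies on a nonempty closed walk. -/
def Acyclic {n : ℕ} (E : Fin n → Fin n → Prop) : Prop :=
  ∀ v, ¬ Relation.TransGen E v v

/-- The graph `G_M` induced by a model `σ` via the edge variables `e`. -/
def modelGraph {n : ℕ} {Var : Type*} (E : Fin n → Fin n → Prop)
    (e : Fin n → Fin n → Var) (σ : Var → Prop) : Fin n → Fin n → Prop :=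
  fun i j => E i j ∧ σ (e i j)

section auxlems

variable {n : ℕ}

lemma elimSeq_mono {E F : Fin n → Fin n → Prop} (h : ∀ a b, E a b → F a b) :
    ∀ i a b, elimSeq E i a b → elimSeq F i a b := by
  intro i
  induction i with
  | zero => exact h
  | succ i ih =>
    rintro a b ⟨h1, h2, h3⟩
    refine ⟨h1, h2, ?_⟩
    rcases h3 with h3 | ⟨hne, m, hm, h4, h5⟩
    · exact Or.inl (ih _ _ h3)
    · exact Or.inr ⟨hne, m, hm, ih _ _ h4, ih _ _ h5⟩

lemma elimSeq_cases {E : Fin n → Fin n → Prop} :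
    ∀ i a b, elimSeq E i a b → E a b ∨ ∃ m, tri E a m b := by
  intro i
  induction i with
  | zero => intro a b h; exact Or.inl h
  | succ i ih =>
    rintro a b ⟨_, _, h3 | ⟨hne, m, hm, h4, h5⟩⟩
    · exact ih _ _ h3
    · exact Or.inr ⟨m, hne, by rw [hm]; exact h4, by rw [hm]; exact h5⟩

lemma elimSeq_val_ge {E : Fin n → Fin n → Prop} :
    ∀ i a b, elimSeq E i a b → i ≤ a.val ∧ i ≤ b.val := by
  intro i
  induction i with
  | zero => intro a b _; exact ⟨Nat.zero_le _, Nat.zero_le _⟩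
  | succ i ih =>
    rintro a b ⟨h1, h2, h3 | ⟨hne, m, hm, h4, h5⟩⟩
    · obtain ⟨ha, hb⟩ := ih _ _ h3
      exact ⟨Nat.lt_of_le_of_ne ha (Ne.symm h1), Nat.lt_of_le_of_ne hb (Ne.symm h2)⟩
    · obtain ⟨ha, _⟩ := ih _ _ h4
      obtain ⟨_, hb⟩ := ih _ _ h5
      exact ⟨Nat.lt_of_le_of_ne ha (Ne.symm h1), Nat.lt_of_le_of_ne hb (Ne.symm h2)⟩

lemma elim_step {E : Fin n → Fin n → Prop} {i : ℕ} {y : Fin n} (hy : y.val ≠ i)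
    {x : Fin n} (hxy : Relation.TransGen (elimSeq E i) x y) :
    ∀ p : Fin n, p.val ≠ i → (elimSeq E i p x ∨ p = x) →
      p = y ∨ Relation.TransGen (elimSeq E (i + 1)) p y := by
  induction hxy using Relation.TransGen.head_induction_on with
  | single h =>
    rename_i a
    intro p hp hpa
    rcases hpa with hpa | rfl
    · by_cases hai : a.val = i
      · by_cases hpy : p = y
        · exact Or.inl hpy
        · exact Or.inr (Relation.TransGen.single
            ⟨hp, hy, Or.inr ⟨hpy, a, hai, hpa, h⟩⟩)
      · exact Or.inr ((Relation.TransGen.single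
          (show elimSeq E (i+1) a y from ⟨hai, hy, Or.inl h⟩)).head
          ⟨hp, hai, Or.inl hpa⟩)
    · exact Or.inr (Relation.TransGen.single ⟨hp, hy, Or.inl h⟩)
  | head h' ht ih =>
    rename_i a c
    intro p hp hpa
    rcases hpa with hpa | rfl
    · by_cases hai : a.val = i
      · by_cases hci : c.val = i
        · -- then c = a, so elimSeq E i p c
          have hca : c = a := Fin.ext (hci.trans hai.symm)
          exact ih p hp (Or.inl (hca ▸ hpa))
        · by_cases hpc : p = c
          · exact ih p hp (Or.inr hpc)
          · -- triangle p → a → c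
            have htri : elimSeq E (i+1) p c := ⟨hp, hci, Or.inr ⟨hpc, a, hai, hpa, h'⟩⟩
            rcases ih c hci (Or.inr rfl) with rfl | hc
            · exact Or.inr (Relation.TransGen.single htri)
            · exact Or.inr (hc.head htri)
      · rcases ih a hai (Or.inl h') with rfl | hc
        · exact Or.inr (Relation.TransGen.single ⟨hp, hai, Or.inl hpa⟩)
        · exact Or.inr (hc.head ⟨hp, hai, Or.inl hpa⟩)
    · exact ih p hp (Or.inl h')

lemma elim_reach {E : Fin n → Fin n → Prop} {s t : Fin n} (hst : s ≠ t)
    (h : Relation.TransGen E s t) :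
    ∀ i, i ≤ s.val → i ≤ t.val → Relation.TransGen (elimSeq E i) s t := by
  intro i
  induction i with
  | zero => intro _ _; exact h
  | succ i ih =>
    intro hs ht
    have h' := ih (Nat.le_of_succ_le hs) (Nat.le_of_succ_le ht)
    have := elim_step (Nat.ne_of_gt ht) h' s (Nat.ne_of_gt hs) (Or.inr rfl)
    rcases this with h | h
    · exact absurd h hst
    · exact h

lemma two_vertex {R : Fin n → Fin n → Prop} {s t : Fin n}
    (hmem : ∀ a b, R a b → (b = s ∨ b = t))
    (h : Relation.TransGen R s t) : R s t := by
  suffices H : ∀ a, Relation.TransGen R a t → a = s → R s t from H s h rfl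
  intro a h
  induction h using Relation.TransGen.head_induction_on with
  | single hb => rintro rfl; exact hb
  | head h' ht ih =>
    rintro rfl
    rcases hmem _ _ h' with rfl | rfl
    · exact ih rfl
    · exact h'

end auxlems

/-- completeness of the vertex elimination s-t-reachability
encoding, where the elimination ordering places `s` and `t` after all other
vertices. -/
theorem stmt8 {n : ℕ} {Var : Type*} (E : Fin n → Fin n → Prop)
    (φ : (Var → Prop) → Prop) (e : Fin n → Fin n → Var)
    (s t : Fin n) (hst : s ≠ t)
    (horder : ∀ v : Fin n, v ≠ s → v ≠ t → v.val < s.val ∧ v.val < t.val)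
    (σ : Var → Prop) (hφ : φ σ)
    (hreach : Relation.TransGen (modelGraph E e σ) s t) :
    ∃ (σ' : Var → Prop) (e' : Fin n → Fin n → Prop)
      (t' : Fin n → Fin n → Fin n → Prop),
      φ σ' ∧
      (∀ i j, estar E i j → e' i j →
        ((E i j ∧ σ' (e i j)) ∨ ∃ k, tri E i k j ∧ t' i k j)) ∧
      (∀ i k j, tri E i k j → t' i k j → e' i k ∧ e' k j) ∧
      e' s t := by
  set M : Fin n → Fin n → Prop := modelGraph E e σ with hM
  refine ⟨σ, estar M, tri M, hφ, ?_, ?_, ?_⟩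
  · intro i j _ hij
    obtain ⟨st, h⟩ := hij
    rcases elimSeq_cases st i j h with h | ⟨m, hne, h1, h2⟩
    · exact Or.inl h
    · have hMsub : ∀ a b, M a b → E a b := fun a b h => h.1
      exact Or.inr ⟨m, ⟨hne, elimSeq_mono hMsub _ _ _ h1, elimSeq_mono hMsub _ _ _ h2⟩,
        ⟨hne, h1, h2⟩⟩
  · rintro i k j _ ⟨_, h1, h2⟩
    exact ⟨⟨k.val, h1⟩, ⟨k.val, h2⟩⟩
  · -- e' s t
    set m := min s.val t.val with hm
    have hts : Relation.TransGen (elimSeq M m) s t :=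
      elim_reach hst hreach m (min_le_left _ _) (min_le_right _ _)
    refine ⟨m, two_vertex ?_ hts⟩
    intro a b hab
    by_contra hb
    push_neg at hb
    have := (horder b hb.1 hb.2)
    have hge := (elimSeq_val_ge m a b hab).2
    have : b.val < m := lt_min this.1 this.2
    omega
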